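/- Let δ be an ordinal of uncountable cofinality and let E be a stationary subset of δ that is locally compact in its subspace (order) topology. Then some tail (final segment) of E is a closed, unbounded subset of δ. -/

import Mathlib

open Set Cardinal

/-- `C` is a closed unbounded (club) subset of the ordinal `δ`. -/
def IsClubIn (C : Set Ordinal) (δ : Ordinal) : Prop :=
  C ⊆ Set.Iio δ ∧
  (∀ a < δ, ∃ b ∈ C, a ≤ b ∧ b < δ) ∧
  (∀ a < δ, a ≠ 0 → (∀ b < a, ∃ c ∈ C, b < c ∧ c < a) → a ∈ C)

/-- If `δ` has uncountable cofinality and `E` is a stationary subset of `δ` that is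
locally compact in the subspace topology, then some tail of `E` is a club in `δ`. -/
theorem stationary_locallyCompact_tail_club (δ : Ordinal)
    (hδ : Cardinal.aleph0 < δ.cof) (E : Set Ordinal) (hE : E ⊆ Set.Iio δ)
    (hstat : ∀ C : Set Ordinal, IsClubIn C δ → (E ∩ C).Nonempty)
    (hlc : LocallyCompactSpace ↥E) :
    ∃ β < δ, IsClubIn (E ∩ Set.Ici β) δ := by
  have hδlim : Order.IsSuccLimit δ := Ordinal.aleph0_le_cof.1 hδ.le
  -- `E` is unbounded in `δ`
  have hIcoClub : ∀ x < δ, IsClubIn (Set.Ico x δ) δ := by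
    intro x hx
    refine ⟨fun y hy => hy.2, fun a ha => ⟨max x a, ⟨le_max_left _ _, max_lt hx ha⟩,
      le_max_right _ _, max_lt hx ha⟩, ?_⟩
    intro a ha ha0 h
    obtain ⟨c, hc, -, hca⟩ := h 0 (pos_iff_ne_zero.2 ha0)
    exact ⟨hc.1.trans hca.le, ha⟩
  have hEunb : ∀ a < δ, ∃ b ∈ E, a ≤ b ∧ b < δ := by
    intro a ha
    obtain ⟨b, hbE, hb⟩ := hstat _ (hIcoClub a ha)
    exact ⟨b, hbE, hb.1, hb.2⟩
  -- `D`: limit points of `E` below `δ`; `B`: those not in `E`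
  set D : Set Ordinal := {x | x < δ ∧ x ≠ 0 ∧ ∀ b < x, ∃ c ∈ E, b < c ∧ c < x} with hD
  set B : Set Ordinal := D \ E with hBdef
  by_cases hB : ∃ β < δ, ∀ γ ∈ B, γ < β
  · -- `B` bounded: the tail above the bound is a club
    obtain ⟨β, hβδ, hβ⟩ := hB
    refine ⟨β, hβδ, fun y hy => hE hy.1, ?_, ?_⟩
    · intro a ha
      obtain ⟨b, hbE, hb1, hb2⟩ := hEunb (max a β) (max_lt ha hβδ)
      exact ⟨b, ⟨hbE, (le_max_right a β).trans hb1⟩, (le_max_left a β).trans hb1, hb2⟩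
    · intro a ha ha0 h
      have haD : a ∈ D := by
        refine ⟨ha, ha0, fun b hb => ?_⟩
        obtain ⟨c, hc, h1, h2⟩ := h b hb
        exact ⟨c, hc.1, h1, h2⟩
      have hβa : β < a := by
        obtain ⟨c, hc, -, hca⟩ := h 0 (pos_iff_ne_zero.2 ha0)
        exact lt_of_le_of_lt hc.2 hca
      have haE : a ∈ E := by
        by_contra hae
        exact absurd (hβ a ⟨haD, hae⟩) (not_lt.2 hβa.le)
      exact ⟨haE, hβa.le⟩
  · -- `B` unbounded: derive a contradiction from local compactness
    exfalso
    push_neg at hB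
    have hBlt : ∀ γ ∈ B, γ < δ := fun γ hγ => hγ.1.1
    have hnext : ∀ x < δ, ∃ γ, γ ∈ B ∧ x < γ ∧ γ < δ := by
      intro x hx
      obtain ⟨γ, hγB, hγ⟩ := hB (Order.succ x) (hδlim.succ_lt hx)
      exact ⟨γ, hγB, (Order.succ_le_iff.1 hγ), hBlt _ hγB⟩
    -- the set of limit points of `B` is a club
    set C : Set Ordinal := {x | x < δ ∧ x ≠ 0 ∧ ∀ b < x, ∃ γ ∈ B, b < γ ∧ γ < x} with hC
    have hCclub : IsClubIn C δ := by
      refine ⟨fun y hy => hy.1, ?_, ?_⟩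
      · -- unboundedness: take sups of ω-chains in `B`
        intro a ha
        let F : {x : Ordinal // x < δ} → {x : Ordinal // x < δ} := fun x =>
          ⟨(hnext x.1 x.2).choose, (hnext x.1 x.2).choose_spec.2.2⟩
        have hFB : ∀ x, (F x).1 ∈ B := fun x => (hnext x.1 x.2).choose_spec.1
        have hFlt : ∀ x, x.1 < (F x).1 := fun x => (hnext x.1 x.2).choose_spec.2.1
        let g : ℕ → {x : Ordinal // x < δ} := fun n => F^[n] (F ⟨a, ha⟩)
        have hg_succ : ∀ n, g (n + 1) = F (g n) := fun n =>
          Function.iterate_succ_apply' F n (F ⟨a, ha⟩)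
        have hgB : ∀ n, (g n).1 ∈ B := by
          intro n
          cases n with
          | zero => exact hFB _
          | succ m => rw [hg_succ m]; exact hFB _
        have hgmono : ∀ n, (g n).1 < (g (n + 1)).1 := by
          intro n; rw [hg_succ n]; exact hFlt _
        set s : Ordinal := ⨆ n, (g n).1 with hs
        have hsδ : s < δ := by
          refine Ordinal.iSup_lt_ord_lift ?_ (fun n => (g n).2)
          rwa [Cardinal.mk_nat, Cardinal.lift_aleph0]
        have hle : ∀ n, (g n).1 ≤ s := fun n => Ordinal.le_iSup (fun n => (g n).1) n
        have hlts : ∀ n, (g n).1 < s := fun n => lt_of_lt_of_le (hgmono n) (hle (n + 1))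
        have has : a < s := (hFlt ⟨a, ha⟩).trans_le (hle 0)
        refine ⟨s, ⟨hsδ, ?_, ?_⟩, has.le, hsδ⟩
        · exact fun h0 => absurd (h0 ▸ hlts 0) (by simp)
        · intro b hb
          obtain ⟨n, hn⟩ := Ordinal.lt_iSup_iff.1 hb
          exact ⟨(g n).1, hgB n, hn, hlts n⟩
      · -- closedness
        intro a ha ha0 h
        refine ⟨ha, ha0, fun b hb => ?_⟩
        obtain ⟨c, hc, hbc, hca⟩ := h b hb
        obtain ⟨γ, hγB, hbγ, hγc⟩ := hc.2.2 b hbc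
        exact ⟨γ, hγB, hbγ, hγc.trans hca⟩
    obtain ⟨α, hαE, hαC⟩ := hstat C hCclub
    have hα0 : α ≠ 0 := hαC.2.1
    -- `α` is a limit point of `E`
    have hαlim : ∀ b < α, ∃ c ∈ E, b < c ∧ c < α := by
      intro b hb
      obtain ⟨γ, hγB, hbγ, hγα⟩ := hαC.2.2 b hb
      obtain ⟨c, hcE, hbc, hcγ⟩ := hγB.1.2.2 b hbγ
      exact ⟨c, hcE, hbc, hcγ.trans hγα⟩
    -- a compact neighborhood of `α` inside `E`
    obtain ⟨K, hKnhds, -, hKcomp⟩ :=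
      hlc.local_compact_nhds (⟨α, hαE⟩ : ↥E) Set.univ Filter.univ_mem
    obtain ⟨U, hU, hUK⟩ := (mem_nhds_subtype E ⟨α, hαE⟩ K).1 hKnhds
    obtain ⟨β, hβα, hβU⟩ := (SuccOrder.hasBasis_nhds_Ioc_of_exists_lt ⟨0, pos_iff_ne_zero.2 hα0⟩).mem_iff.1 hU
    set K' : Set Ordinal := Subtype.val '' K with hK'
    have hK'E : K' ⊆ E := by
      rintro y ⟨⟨y, hy⟩, -, rfl⟩
      exact hy
    have hK'closed : IsClosed K' := (hKcomp.image continuous_subtype_val).isClosed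
    have hsub : ∀ c, c ∈ E → β < c → c ≤ α → c ∈ K' := by
      intro c hcE h1 h2
      exact ⟨⟨c, hcE⟩, hUK (hβU ⟨h1, h2⟩), rfl⟩
    obtain ⟨γ, hγB, hβγ, hγα⟩ := hαC.2.2 β hβα
    have hγ0 : γ ≠ 0 := hγB.1.2.1
    have hγcl : γ ∈ closure K' := by
      rw [mem_closure_iff_nhds_basis' (SuccOrder.hasBasis_nhds_Ioc_of_exists_lt ⟨0, pos_iff_ne_zero.2 hγ0⟩)]
      intro b hb
      obtain ⟨c, hcE, hbc, hcγ⟩ := hγB.1.2.2 (max b β) (max_lt hb hβγ)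
      refine ⟨c, ⟨lt_of_le_of_lt (le_max_left b β) hbc, hcγ.le⟩, ?_⟩
      exact hsub c hcE (lt_of_le_of_lt (le_max_right b β) hbc) (hcγ.trans hγα).le
    rw [hK'closed.closure_eq] at hγcl
    exact hγB.2 (hK'E hγcl)
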